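/- Define F(x,y,z) = sinh(x) − sin(y)·sinh(z). Then for every (x,y,z) ∈ ℝ³ with F(x,y,z) = 0: (i) E[F](x,y,z) = 0 (the surface {sinh x = sin y · sinh z} has zero mean curvature), and (ii) F_x² + F_y² − F_z² = cos²(y)·cosh²(z) ≥ 0, with equality exactly when cos(y) = 0; hence the surface is timelike except along the set {cos y = 0}. -/

import Mathlib

/-- Partial derivative with respect to the first variable. -/
noncomputable def px (F : ℝ → ℝ → ℝ → ℝ) (x y z : ℝ) : ℝ := deriv (fun t => F t y z) x

/-- Partial derivative with respect to the second variable. -/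
noncomputable def py (F : ℝ → ℝ → ℝ → ℝ) (x y z : ℝ) : ℝ := deriv (fun t => F x t z) y

/-- Partial derivative with respect to the third variable. -/
noncomputable def pz (F : ℝ → ℝ → ℝ → ℝ) (x y z : ℝ) : ℝ := deriv (fun t => F x y t) z

/-- The zero mean curvature expression `E[F]` for a level surface `{F = 0}` in
Lorentz–Minkowski space `𝕃³ = (ℝ³, dx² + dy² − dz²)`:
`E[F] = −(F_x² + F_y² − F_z²)(F_xx + F_yy − F_zz) + F_x²F_xx + F_y²F_yy + F_z²F_zz
        + 2F_xF_yF_xy − 2F_xF_zF_xz − 2F_yF_zF_yz`. -/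
noncomputable def Eop (F : ℝ → ℝ → ℝ → ℝ) (x y z : ℝ) : ℝ :=
  -(px F x y z ^ 2 + py F x y z ^ 2 - pz F x y z ^ 2) *
      (px (px F) x y z + py (py F) x y z - pz (pz F) x y z)
    + px F x y z ^ 2 * px (px F) x y z
    + py F x y z ^ 2 * py (py F) x y z
    + pz F x y z ^ 2 * pz (pz F) x y z
    + 2 * px F x y z * py F x y z * py (px F) x y z
    - 2 * px F x y z * pz F x y z * pz (px F) x y z
    - 2 * py F x y z * pz F x y z * pz (py F) x y z

/-- The surface `sinh x = sin y · sinh z` has zero mean curvature and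
`F_x² + F_y² − F_z² = cos²y · cosh²z ≥ 0`, with equality exactly when `cos y = 0`: it is
timelike except along `{cos y = 0}`. -/
theorem stmt_18 (F : ℝ → ℝ → ℝ → ℝ)
    (hF : ∀ x y z : ℝ, F x y z = Real.sinh x - Real.sin y * Real.sinh z) :
    ∀ x y z : ℝ, F x y z = 0 →
      Eop F x y z = 0 ∧
      px F x y z ^ 2 + py F x y z ^ 2 - pz F x y z ^ 2
        = Real.cos y ^ 2 * Real.cosh z ^ 2 ∧
      0 ≤ px F x y z ^ 2 + py F x y z ^ 2 - pz F x y z ^ 2 ∧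
      (px F x y z ^ 2 + py F x y z ^ 2 - pz F x y z ^ 2 = 0 ↔ Real.cos y = 0) := by
  have h1 : ∀ x y z : ℝ, px F x y z = Real.cosh x := by
    intro x y z
    rw [px, show (fun t => F t y z) = fun t => Real.sinh t - Real.sin y * Real.sinh z from
      funext fun t => hF t y z]
    exact ((Real.hasDerivAt_sinh x).sub_const _).deriv
  have h2 : ∀ x y z : ℝ, py F x y z = -(Real.cos y * Real.sinh z) := by
    intro x y z
    rw [py, show (fun t => F x t z) = fun t => Real.sinh x - Real.sin t * Real.sinh z from
      funext fun t => hF x t z]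
    exact (((Real.hasDerivAt_sin y).mul_const _).const_sub _).deriv
  have h3 : ∀ x y z : ℝ, pz F x y z = -(Real.sin y * Real.cosh z) := by
    intro x y z
    rw [pz, show (fun t => F x y t) = fun t => Real.sinh x - Real.sin y * Real.sinh t from
      funext fun t => hF x y t]
    exact (((Real.hasDerivAt_sinh z).const_mul (Real.sin y)).const_sub (Real.sinh x)).deriv
  intro x y z h0
  have h0' : Real.sinh x = Real.sin y * Real.sinh z := by
    have := hF x y z; rw [this] at h0; linarith
  have hxx : px (px F) x y z = Real.sinh x := by
    rw [px, show (fun t => px F t y z) = fun t => Real.cosh t from funext fun t => h1 t y z]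
    exact (Real.hasDerivAt_cosh x).deriv
  have hyy : py (py F) x y z = Real.sin y * Real.sinh z := by
    rw [py, show (fun t => py F x t z) = fun t => -(Real.cos t * Real.sinh z) from
      funext fun t => h2 x t z]
    have := (((Real.hasDerivAt_cos y).mul_const (Real.sinh z)).neg).deriv
    exact this.trans (by ring)
  have hzz : pz (pz F) x y z = -(Real.sin y * Real.sinh z) := by
    rw [pz, show (fun t => pz F x y t) = fun t => -(Real.sin y * Real.cosh t) from
      funext fun t => h3 x y t]
    exact (((Real.hasDerivAt_cosh z).const_mul (Real.sin y)).neg).deriv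
  have hxy : py (px F) x y z = 0 := by
    rw [py, show (fun t => px F x t z) = fun _ => Real.cosh x from funext fun t => h1 x t z]
    exact deriv_const _ _
  have hxz : pz (px F) x y z = 0 := by
    rw [pz, show (fun t => px F x y t) = fun _ => Real.cosh x from funext fun t => h1 x y t]
    exact deriv_const _ _
  have hyz : pz (py F) x y z = -(Real.cos y * Real.cosh z) := by
    rw [pz, show (fun t => py F x y t) = fun t => -(Real.cos y * Real.sinh t) from
      funext fun t => h2 x y t]
    exact (((Real.hasDerivAt_sinh z).const_mul (Real.cos y)).neg).deriv
  have hb : Real.cosh x ^ 2 = 1 + Real.sinh x ^ 2 := by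
    have := Real.cosh_sq x; linarith
  have hC : Real.cosh z ^ 2 = 1 + Real.sinh z ^ 2 := by
    have := Real.cosh_sq z; linarith
  have hs : Real.sin y ^ 2 + Real.cos y ^ 2 = 1 := Real.sin_sq_add_cos_sq y
  have key : px F x y z ^ 2 + py F x y z ^ 2 - pz F x y z ^ 2
      = Real.cos y ^ 2 * Real.cosh z ^ 2 := by
    rw [h1, h2, h3]
    linear_combination hb + (Real.sinh x + Real.sin y * Real.sinh z) * h0' +
      (Real.sinh z ^ 2 - Real.cosh z ^ 2) * hs - hC
  refine ⟨?_, key, ?_, ?_⟩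
  · rw [Eop, h1, h2, h3, hxx, hyy, hzz, hxy, hxz, hyz]
    linear_combination (-2 * Real.sin y * Real.sinh z) * hb +
      (1 - 2 * Real.sinh x * Real.sin y * Real.sinh z - Real.sin y ^ 2 * Real.sinh z ^ 2 -
        Real.cos y ^ 2 * Real.cosh z ^ 2) * h0' +
      (-(Real.sinh x + Real.sin y * Real.sinh z) * (Real.sinh z ^ 2 - Real.cosh z ^ 2)) * hs +
      (Real.sinh x + Real.sin y * Real.sinh z) * hC
  · rw [key]; positivity
  · rw [key]
    constructor
    · intro h
      have hCpos : (0:ℝ) < Real.cosh z ^ 2 := by positivity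
      have : Real.cos y ^ 2 = 0 := by
        rcases mul_eq_zero.1 h with h' | h'
        · exact h'
        · exact absurd h' (ne_of_gt hCpos)
      exact pow_eq_zero_iff (n := 2) (by norm_num) |>.1 this
    · intro h; rw [h]; ring
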